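/- For the infinite countable torus 𝕋^ℕ with γ(ξ_m) = 2π Σ_ℓ |m_ℓ| defined on the dual group {ξ_m : m ∈ ℤ^ℕ with finite support}, the Sobolev space H¹_γ(𝕋^ℕ) is not compactly embedded in L²(𝕋^ℕ). -/

import Mathlib

open MeasureTheory ENNReal Real

noncomputable def eChar (n : ℕ →₀ ℤ) : (ℕ → AddCircle (1 : ℝ)) → ℂ :=
  fun x => ∏ ℓ ∈ n.support, fourier (n ℓ) (x ℓ)

lemma eChar_eq_prod (n : ℕ →₀ ℤ) {s : Finset ℕ} (hs : n.support ⊆ s)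
    (x : ℕ → AddCircle (1 : ℝ)) :
    eChar n x = ∏ ℓ ∈ s, fourier (n ℓ) (x ℓ) := by
  unfold eChar
  apply Finset.prod_subset hs
  intro ℓ _ hℓ
  rw [Finsupp.notMem_support_iff.mp hℓ, fourier_zero]

lemma eChar_mul_conj (n m : ℕ →₀ ℤ) (x : ℕ → AddCircle (1 : ℝ)) :
    eChar n x * (starRingEnd ℂ) (eChar m x) = eChar (n - m) x := by
  classical
  set s := n.support ∪ m.support ∪ (n - m).support with hs
  rw [eChar_eq_prod n (s := s) (by intro a ha; simp [hs, ha]) x,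
    eChar_eq_prod m (s := s) (by intro a ha; simp [hs, ha]) x,
    eChar_eq_prod (n - m) (s := s) (by intro a ha; simp [hs, ha]) x,
    map_prod, ← Finset.prod_mul_distrib]
  refine Finset.prod_congr rfl fun ℓ _ => ?_
  rw [← fourier_neg, ← fourier_add, Finsupp.sub_apply, sub_eq_add_neg]

lemma eChar_add (n : ℕ →₀ ℤ) (a x : ℕ → AddCircle (1 : ℝ)) :
    eChar n (a + x) = eChar n a * eChar n x := by
  unfold eChar
  rw [← Finset.prod_mul_distrib]
  refine Finset.prod_congr rfl fun ℓ _ => ?_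
  simp only [Pi.add_apply, fourier_apply, smul_add, AddCircle.toCircle_add, Circle.coe_mul]

lemma eChar_norm (n : ℕ →₀ ℤ) (x : ℕ → AddCircle (1 : ℝ)) : ‖eChar n x‖ = 1 := by
  unfold eChar
  rw [norm_prod]
  exact Finset.prod_eq_one fun ℓ _ => Circle.norm_coe _

lemma eChar_continuous (n : ℕ →₀ ℤ) : Continuous (eChar n) :=
  continuous_finset_prod _ fun ℓ _ => (fourier (n ℓ)).continuous.comp (continuous_apply ℓ)

lemma eChar_apply_ne_one {n : ℕ →₀ ℤ} (hn : n ≠ 0) :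
    ∃ a : ℕ → AddCircle (1 : ℝ), eChar n a ≠ 1 := by
  classical
  obtain ⟨j, hj⟩ : ∃ j, n j ≠ 0 := by
    by_contra h
    push_neg at h
    exact hn (Finsupp.ext h)
  refine ⟨Pi.single j (((1 : ℝ) / 2 / (n j) : ℝ) : AddCircle (1 : ℝ)), ?_⟩
  have hja : eChar n (Pi.single j (((1 : ℝ) / 2 / (n j) : ℝ) : AddCircle (1 : ℝ))) = -1 := by
    unfold eChar
    rw [Finset.prod_eq_single j]
    · rw [Pi.single_eq_same]
      have := fourier_add_half_inv_index (T := 1) hj one_pos (0 : AddCircle (1 : ℝ))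
      rw [zero_add, fourier_eval_zero] at this
      exact this
    · intro ℓ _ hℓ
      rw [Pi.single_eq_of_ne hℓ, fourier_eval_zero]
    · intro hjs
      exact absurd (Finsupp.mem_support_iff.mpr hj) hjs
  rw [hja]
  intro h
  exact (by norm_num : (-1 : ℂ) ≠ 1) h

lemma eChar_integral (μ : Measure (ℕ → AddCircle (1 : ℝ)))
    [μ.IsAddHaarMeasure] [IsProbabilityMeasure μ] (n : ℕ →₀ ℤ) :
    ∫ x, eChar n x ∂μ = if n = 0 then 1 else 0 := by
  split_ifs with h
  · subst h
    simp only [eChar, Finsupp.support_zero, Finset.prod_empty]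
    simp
  · obtain ⟨a, ha⟩ := eChar_apply_ne_one h
    have key : ∫ x, eChar n x ∂μ = eChar n a * ∫ x, eChar n x ∂μ := by
      conv_lhs => rw [← integral_add_left_eq_self (eChar n) a]
      simp_rw [eChar_add, integral_const_mul]
    have h2 : (eChar n a - 1) * ∫ x, eChar n x ∂μ = 0 := by
      rw [sub_mul, one_mul, ← key, sub_self]
    rcases mul_eq_zero.mp h2 with h1 | h1
    · exact absurd (sub_eq_zero.mp h1) ha
    · exact h1

lemma eChar_memLp (μ : Measure (ℕ → AddCircle (1 : ℝ)))
    [μ.IsAddHaarMeasure] [IsProbabilityMeasure μ] (n : ℕ →₀ ℤ) :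
    MemLp (eChar n) 2 μ :=
  MemLp.of_bound (eChar_continuous n).aestronglyMeasurable 1
    (Filter.Eventually.of_forall fun x => (eChar_norm n x).le)

lemma eChar_inner (μ : Measure (ℕ → AddCircle (1 : ℝ)))
    [μ.IsAddHaarMeasure] [IsProbabilityMeasure μ] (n m : ℕ →₀ ℤ) :
    (inner ℂ ((eChar_memLp μ n).toLp (eChar n)) ((eChar_memLp μ m).toLp (eChar m)) : ℂ)
      = if n = m then 1 else 0 := by
  rw [MeasureTheory.L2.inner_def]
  have h1 : ∀ᵐ x ∂μ,
      (inner ℂ (((eChar_memLp μ n).toLp (eChar n) : (ℕ → AddCircle (1:ℝ)) → ℂ) x)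
        (((eChar_memLp μ m).toLp (eChar m) : (ℕ → AddCircle (1:ℝ)) → ℂ) x) : ℂ)
        = eChar (m - n) x := by
    filter_upwards [(eChar_memLp μ n).coeFn_toLp, (eChar_memLp μ m).coeFn_toLp] with x hx hy
    rw [hx, hy, RCLike.inner_apply, eChar_mul_conj]
  rw [integral_congr_ae h1, eChar_integral]
  by_cases h : n = m <;> simp [h, sub_eq_zero, eq_comm]

lemma eChar_coeff (μ : Measure (ℕ → AddCircle (1 : ℝ)))
    [μ.IsAddHaarMeasure] [IsProbabilityMeasure μ] (k : ℕ) (m : ℕ →₀ ℤ) :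
    ∫ x, ((eChar_memLp μ (Finsupp.single k 1)).toLp (eChar (Finsupp.single k 1))
          : (ℕ → AddCircle (1 : ℝ)) → ℂ) x *
        (starRingEnd ℂ) (∏ ℓ ∈ m.support, fourier (m ℓ) (x ℓ)) ∂μ
      = if m = Finsupp.single k 1 then 1 else 0 := by
  have h1 : ∀ᵐ x ∂μ,
      ((eChar_memLp μ (Finsupp.single k 1)).toLp (eChar (Finsupp.single k 1))
          : (ℕ → AddCircle (1 : ℝ)) → ℂ) x *
        (starRingEnd ℂ) (∏ ℓ ∈ m.support, fourier (m ℓ) (x ℓ))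
        = eChar (Finsupp.single k 1 - m) x := by
    filter_upwards [(eChar_memLp μ (Finsupp.single k 1)).coeFn_toLp] with x hx
    rw [hx]
    exact eChar_mul_conj _ m x
  rw [integral_congr_ae h1, eChar_integral]
  by_cases h : m = Finsupp.single k 1 <;> simp [h, sub_eq_zero, eq_comm]

theorem stmt_16
    (μ : Measure (ℕ → AddCircle (1 : ℝ)))
    [μ.IsAddHaarMeasure] [IsProbabilityMeasure μ] :
    ¬ (∀ f : ℕ → Lp ℂ 2 μ,
        (∃ C : ℝ≥0∞, C ≠ ⊤ ∧ ∀ k : ℕ,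
          ∑' m : (ℕ →₀ ℤ),
            ENNReal.ofReal
              (1 + (2 * π * ∑ ℓ ∈ m.support, |(m ℓ : ℝ)|) ^ 2) *
              (‖∫ x, (f k : (ℕ → AddCircle (1 : ℝ)) → ℂ) x *
                  (starRingEnd ℂ) (∏ ℓ ∈ m.support, fourier (m ℓ) (x ℓ)) ∂μ‖₊ : ℝ≥0∞) ^ 2
            ≤ C) →
        ∃ (g : Lp ℂ 2 μ) (s : ℕ → ℕ), StrictMono s ∧
          Filter.Tendsto (fun j => f (s j)) Filter.atTop (nhds g)) := by
  intro H
  set F : ℕ → Lp ℂ 2 μ := fun k =>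
    (eChar_memLp μ (Finsupp.single k 1)).toLp (eChar (Finsupp.single k 1)) with hF
  -- the bound hypothesis
  have hbound : ∃ C : ℝ≥0∞, C ≠ ⊤ ∧ ∀ k : ℕ,
      ∑' m : (ℕ →₀ ℤ),
        ENNReal.ofReal
          (1 + (2 * π * ∑ ℓ ∈ m.support, |(m ℓ : ℝ)|) ^ 2) *
          (‖∫ x, (F k : (ℕ → AddCircle (1 : ℝ)) → ℂ) x *
              (starRingEnd ℂ) (∏ ℓ ∈ m.support, fourier (m ℓ) (x ℓ)) ∂μ‖₊ : ℝ≥0∞) ^ 2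
        ≤ C := by
    refine ⟨ENNReal.ofReal (1 + (2 * π) ^ 2), ENNReal.ofReal_ne_top, fun k => ?_⟩
    have hsum : (∑' m : (ℕ →₀ ℤ),
        ENNReal.ofReal
          (1 + (2 * π * ∑ ℓ ∈ m.support, |(m ℓ : ℝ)|) ^ 2) *
          (‖∫ x, (F k : (ℕ → AddCircle (1 : ℝ)) → ℂ) x *
              (starRingEnd ℂ) (∏ ℓ ∈ m.support, fourier (m ℓ) (x ℓ)) ∂μ‖₊ : ℝ≥0∞) ^ 2)
        = ENNReal.ofReal (1 + (2 * π) ^ 2) := by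
      rw [tsum_eq_single (Finsupp.single k 1)]
      · rw [hF]
        rw [eChar_coeff μ k (Finsupp.single k 1), if_pos rfl]
        have hsupp : (Finsupp.single k (1 : ℤ)).support = {k} :=
          Finsupp.support_single_ne_zero k one_ne_zero
        rw [hsupp]
        norm_num
      · intro m hm
        rw [hF, eChar_coeff μ k m, if_neg hm]
        simp
    rw [hsum]
  obtain ⟨g, s, hs, htend⟩ := H F hbound
  -- orthonormality gives pairwise distance √2
  have hdist : ∀ a b : ℕ, a ≠ b → dist (F a) (F b) ^ 2 = 2 := by
    intro a b hab
    have hne : Finsupp.single a (1 : ℤ) ≠ Finsupp.single b 1 := by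
      intro h
      rcases (Finsupp.single_eq_single_iff _ _ _ _).mp h with ⟨h1, _⟩ | ⟨h1, _⟩
      · exact hab h1
      · exact one_ne_zero h1
    have h1 : (inner ℂ (F a) (F a) : ℂ) = 1 := by rw [hF, eChar_inner, if_pos rfl]
    have h2 : (inner ℂ (F a) (F b) : ℂ) = 0 := by rw [hF, eChar_inner, if_neg hne]
    have h3 : (inner ℂ (F b) (F b) : ℂ) = 1 := by rw [hF, eChar_inner, if_pos rfl]
    rw [dist_eq_norm, norm_sub_sq (𝕜 := ℂ), ← inner_self_eq_norm_sq (𝕜 := ℂ),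
      ← inner_self_eq_norm_sq (𝕜 := ℂ), h1, h2, h3]
    simp
    norm_num
  have hcauchy : CauchySeq (fun j => F (s j)) := htend.cauchySeq
  rw [Metric.cauchySeq_iff] at hcauchy
  obtain ⟨N, hN⟩ := hcauchy 1 one_pos
  have hlt : dist (F (s (N + 1))) (F (s N)) < 1 :=
    hN (N + 1) (Nat.le_succ N) N le_rfl
  have hne : s (N + 1) ≠ s N := fun h => (Nat.succ_ne_self N) (hs.injective h)
  have h2 : dist (F (s (N + 1))) (F (s N)) ^ 2 = 2 := hdist _ _ hne
  have : dist (F (s (N + 1))) (F (s N)) ^ 2 < 1 := by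
    have hd := dist_nonneg (x := F (s (N + 1))) (y := F (s N))
    nlinarith
  rw [h2] at this
  norm_num at this
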